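/- Let G be a group acting by homeomorphisms on a compact Hausdorff space X. For every regular Borel probability measure ν on X, the Poisson map P_ν : C(X,ℝ) → ℓ∞(G) is a unital positive G-equivariant linear map; conversely, for every unital positive G-equivariant linear map ψ : C(X,ℝ) → ℓ∞(G) there exists a unique regular Borel probability measure ν on X such that ψ = P_ν, namely the measure representing the positive functional f ↦ ψ(f)(e). In particular, ν ↦ P_ν is a bijection from the regular Borel probability measures on X onto the unital positive G-equivariant linear maps C(X,ℝ) → ℓ∞(G). -/

import Mathlib

open MeasureTheory

open MeasureTheory TopologicalSpace BoundedContinuousFunction Set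

set_option linter.unusedSectionVars false
set_option maxHeartbeats 1000000

section RMK
variable {X : Type*} [TopologicalSpace X] [CompactSpace X] [T2Space X]
  [MeasurableSpace X] [BorelSpace X]

/-- coerce a bounded `ℝ≥0`-valued function to a real continuous map -/
def toRe (g : CompactlySupportedContinuousMap X NNReal) : C(X, ℝ) :=
  ⟨fun x => (g x : ℝ), NNReal.continuous_coe.comp (map_continuous g)⟩

@[simp] lemma toRe_apply (g : CompactlySupportedContinuousMap X NNReal) (x : X) : toRe g x = (g x : ℝ) := rfl

variable (Λ : C(X, ℝ) →ₗ[ℝ] ℝ)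

lemma lam_mono (hpos : ∀ f : C(X,ℝ), (∀ x, 0 ≤ f x) → 0 ≤ Λ f) {f g : C(X,ℝ)}
    (h : ∀ x, f x ≤ g x) : Λ f ≤ Λ g := by
  have h0 : 0 ≤ Λ (g - f) := hpos _ (fun x => by simp [sub_nonneg, h x])
  rw [map_sub] at h0; linarith

/-- the induced `ℝ≥0`-linear functional on bounded `ℝ≥0`-valued functions -/
def lamNN (hpos : ∀ f : C(X,ℝ), (∀ x, 0 ≤ f x) → 0 ≤ Λ f) :
    CompactlySupportedContinuousMap X NNReal →ₗ[NNReal] NNReal where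
  toFun g := ⟨Λ (toRe g), hpos _ (fun x => (g x).2)⟩
  map_add' g₁ g₂ := by
    ext
    have : toRe (g₁ + g₂) = toRe g₁ + toRe g₂ := by ext x; simp
    simp [this]; rfl
  map_smul' c g := by
    ext
    have : toRe (c • g) = (c : ℝ) • toRe g := by ext x; simp [NNReal.smul_def]
    simp [this, NNReal.smul_def]; rfl

@[simp] lemma lamNN_apply (hpos) (g : CompactlySupportedContinuousMap X NNReal) :
    (lamNN Λ hpos g : ℝ) = Λ (toRe g) := rfl

end RMK

set_option linter.unusedSectionVars false

section RMK2
variable {X : Type*} [TopologicalSpace X] [CompactSpace X] [T2Space X]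
  [MeasurableSpace X] [BorelSpace X]
variable (Λ : C(X, ℝ) →ₗ[ℝ] ℝ) (hpos : ∀ f : C(X,ℝ), (∀ x, 0 ≤ f x) → 0 ≤ Λ f)

lemma lamNN_mono {g₁ g₂ : CompactlySupportedContinuousMap X NNReal} (h : ∀ x, g₁ x ≤ g₂ x) :
    lamNN Λ hpos g₁ ≤ lamNN Λ hpos g₂ := by
  rw [← NNReal.coe_le_coe]
  exact lam_mono Λ hpos (f := toRe g₁) (g := toRe g₂) (fun x => by exact_mod_cast h x)

/-- truncation of a nonneg continuous real function to `X →ᵇ ℝ≥0` -/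
noncomputable def toNN (h : C(X, ℝ)) : CompactlySupportedContinuousMap X NNReal :=
  CompactlySupportedContinuousMap.continuousMapEquiv ⟨fun x => Real.toNNReal (h x), continuous_real_toNNReal.comp h.continuous⟩

@[simp] lemma toNN_apply (h : C(X, ℝ)) (x : X) : toNN h x = Real.toNNReal (h x) := rfl

lemma toRe_toNN (h : C(X, ℝ)) (hh : ∀ x, 0 ≤ h x) : toRe (toNN h) = h := by
  ext x; simp [Real.coe_toNNReal _ (hh x)]

/-- The Riesz content associated to `Λ`. -/
noncomputable def rmkContent : Content X where
  toFun K := rieszContentAux (lamNN Λ hpos) K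
  mono' K₁ K₂ h := rieszContentAux_mono _ h
  sup_le' K₁ K₂ := rieszContentAux_sup_le _ K₁ K₂
  sup_disjoint' K₁ K₂ hd h₁ h₂ := by
    refine le_antisymm (rieszContentAux_sup_le _ K₁ K₂) ?_
    -- superadditivity via Urysohn
    rw [← NNReal.coe_le_coe]
    refine le_of_forall_pos_le_add (fun ε hε => ?_)
    obtain ⟨εn, hεn, hεe⟩ : ∃ εn : NNReal, 0 < εn ∧ (εn : ℝ) ≤ ε :=
      ⟨Real.toNNReal ε, by simp [hε], by simp [Real.coe_toNNReal _ hε.le]⟩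
    obtain ⟨f, hf1, hfΛ⟩ := exists_lt_rieszContentAux_add_pos (lamNN Λ hpos) (K₁ ⊔ K₂) hεn
    obtain ⟨g, hg0, hg1, hg01⟩ := exists_continuous_zero_one_of_isClosed h₂ h₁ hd.symm
    set F₁ : C(X, ℝ) := toRe f * g with hF₁
    set F₂ : C(X, ℝ) := toRe f * (1 - g) with hF₂
    have hgx : ∀ x, 0 ≤ g x ∧ g x ≤ 1 := fun x => ⟨(hg01 x).1, (hg01 x).2⟩
    have hF₁0 : ∀ x, 0 ≤ F₁ x := fun x => mul_nonneg (f x).2 (hgx x).1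
    have hF₂0 : ∀ x, 0 ≤ F₂ x := fun x => by
      simp only [hF₂, ContinuousMap.mul_apply, ContinuousMap.sub_apply, ContinuousMap.one_apply]
      exact mul_nonneg (f x).2 (by linarith [(hgx x).2])
    have hsum : Λ F₁ + Λ F₂ = Λ (toRe f) := by
      rw [← map_add]; congr 1; ext x; simp [hF₁, hF₂]; ring
    have hK₁ : rieszContentAux (lamNN Λ hpos) K₁ ≤ lamNN Λ hpos (toNN F₁) := by
      apply rieszContentAux_le
      intro x hx
      have : F₁ x = (f x : ℝ) := by simp [hF₁, hg1 hx]
      simp only [toNN_apply, this]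
      have := hf1 x (Or.inl hx)
      simpa using this
    have hK₂ : rieszContentAux (lamNN Λ hpos) K₂ ≤ lamNN Λ hpos (toNN F₂) := by
      apply rieszContentAux_le
      intro x hx
      have : F₂ x = (f x : ℝ) := by
        simp [hF₂, hg0 hx]
      simp only [toNN_apply, this]
      have := hf1 x (Or.inr hx)
      simpa using this
    have e₁ : (lamNN Λ hpos (toNN F₁) : ℝ) = Λ F₁ := by
      simp [toRe_toNN F₁ hF₁0]
    have e₂ : (lamNN Λ hpos (toNN F₂) : ℝ) = Λ F₂ := by
      simp [toRe_toNN F₂ hF₂0]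
    have hlt : (lamNN Λ hpos f : ℝ) ≤ (rieszContentAux (lamNN Λ hpos) (K₁ ⊔ K₂) : ℝ) + ε := by
      have := hfΛ.le
      have := NNReal.coe_le_coe.2 this
      push_cast at this ⊢
      linarith [hεe]
    calc ((rieszContentAux (lamNN Λ hpos) K₁ + rieszContentAux (lamNN Λ hpos) K₂ : NNReal) : ℝ)
        ≤ Λ F₁ + Λ F₂ := by
          push_cast
          have := NNReal.coe_le_coe.2 hK₁
          have := NNReal.coe_le_coe.2 hK₂
          rw [e₁] at *; rw [e₂] at *; linarith
      _ = Λ (toRe f) := hsum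
      _ = (lamNN Λ hpos f : ℝ) := rfl
      _ ≤ _ := hlt

end RMK2

section RMK3
variable {X : Type*} [TopologicalSpace X] [CompactSpace X] [T2Space X]
  [MeasurableSpace X] [BorelSpace X]
variable (Λ : C(X, ℝ) →ₗ[ℝ] ℝ) (hpos : ∀ f : C(X,ℝ), (∀ x, 0 ≤ f x) → 0 ≤ Λ f)

/-- The Riesz measure. -/
noncomputable def rmkMeasure : Measure X := (rmkContent Λ hpos).measure

lemma rmkMeasure_regular : (rmkMeasure Λ hpos).Regular := Content.regular _

lemma lamNN_one : (lamNN Λ hpos (toNN 1) : ℝ) = Λ 1 := by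
  have : toRe (toNN (1 : C(X, ℝ))) = (1 : C(X, ℝ)) := by ext x; simp
  simp [this]

lemma rmkContent_univ (hone : Λ 1 = 1) :
    rieszContentAux (lamNN Λ hpos) ⟨univ, isCompact_univ⟩ = 1 := by
  refine le_antisymm ?_ ?_
  · have h1 : ∀ x ∈ (⟨univ, isCompact_univ⟩ : Compacts X), 1 ≤ (toNN (1 : C(X, ℝ))) x := by
      intro x _; simp
    have := rieszContentAux_le (lamNN Λ hpos) h1
    rw [← NNReal.coe_le_coe] at this ⊢
    rw [lamNN_one Λ hpos, hone] at this
    simpa using this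
  · -- 1 ≤ inf
    rw [rieszContentAux]
    refine le_csInf (rieszContentAux_image_nonempty _ _) ?_
    rintro b ⟨f, hf, rfl⟩
    have : lamNN Λ hpos (toNN 1) ≤ lamNN Λ hpos f :=
      lamNN_mono Λ hpos (fun x => by simpa using hf x (mem_univ x))
    rw [← NNReal.coe_le_coe] at this ⊢
    rw [lamNN_one Λ hpos, hone] at this
    simpa using this

lemma rmkMeasure_univ (hone : Λ 1 = 1) : rmkMeasure Λ hpos univ = 1 := by
  rw [rmkMeasure, Content.measure_apply _ MeasurableSet.univ]
  have : ((⟨univ, isOpen_univ⟩ : Opens X) : Set X) = univ := rfl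
  rw [show (univ : Set X) = ((⟨univ, isOpen_univ⟩ : Opens X) : Set X) from rfl,
    Content.outerMeasure_opens]
  refine le_antisymm ?_ ?_
  · have := Content.innerContent_le (rmkContent Λ hpos) ⟨univ, isOpen_univ⟩
      ⟨univ, isCompact_univ⟩ (subset_refl _)
    refine le_trans this ?_
    simp [rmkContent, rmkContent_univ Λ hpos hone]
  · have := Content.le_innerContent (rmkContent Λ hpos) ⟨univ, isCompact_univ⟩
      ⟨univ, isOpen_univ⟩ (subset_refl _)
    refine le_trans ?_ this
    simp [rmkContent, rmkContent_univ Λ hpos hone]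

lemma rmk_isProbability (hone : Λ 1 = 1) : IsProbabilityMeasure (rmkMeasure Λ hpos) :=
  ⟨rmkMeasure_univ Λ hpos hone⟩

/-- key upper bound: `Λ p ≤ μ V` for `p` subordinate to `V`. -/
lemma lam_le_measure_of_tsupport (hone : Λ 1 = 1)
    (p : C(X, ℝ)) (hp0 : ∀ x, 0 ≤ p x) (hp1 : ∀ x, p x ≤ 1)
    {V : Set X} (hV : IsOpen V) (hpV : tsupport p ⊆ V) :
    Λ p ≤ (rmkMeasure Λ hpos V).toReal := by
  set K : Compacts X := ⟨tsupport p, (isClosed_tsupport _).isCompact⟩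
  have h1 : Λ p ≤ (rieszContentAux (lamNN Λ hpos) K : ℝ) := by
    rw [rieszContentAux]
    have hne := rieszContentAux_image_nonempty (lamNN Λ hpos) K
    have : (Real.toNNReal (Λ p) : ℝ) = Λ p := Real.coe_toNNReal _ (hpos p hp0)
    rw [← this, NNReal.coe_le_coe]
    refine le_csInf hne ?_
    rintro b ⟨f, hf, rfl⟩
    rw [← NNReal.coe_le_coe, this]
    have : ∀ x, p x ≤ toRe f x := by
      intro x
      by_cases hx : x ∈ tsupport p
      · exact le_trans (hp1 x) (by exact_mod_cast hf x hx)
      · rw [image_eq_zero_of_notMem_tsupport hx]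
        exact (f x).2
    exact lam_mono Λ hpos this
  haveI := rmk_isProbability Λ hpos hone
  have h2 : ((rieszContentAux (lamNN Λ hpos) K : NNReal) : ENNReal) ≤ rmkMeasure Λ hpos V := by
    rw [rmkMeasure, Content.measure_apply _ hV.measurableSet,
      show V = ((⟨V, hV⟩ : Opens X) : Set X) from rfl, Content.outerMeasure_opens]
    exact Content.le_innerContent _ K ⟨V, hV⟩ hpV
  have hfin : rmkMeasure Λ hpos V ≠ ⊤ := measure_ne_top _ _
  refine h1.trans ?_
  have := ENNReal.toReal_mono hfin h2
  simpa using this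

end RMK3

section RMK4
variable {X : Type*} [TopologicalSpace X] [CompactSpace X] [T2Space X]
  [MeasurableSpace X] [BorelSpace X]
variable (Λ : C(X, ℝ) →ₗ[ℝ] ℝ) (hpos : ∀ f : C(X,ℝ), (∀ x, 0 ≤ f x) → 0 ≤ Λ f)

lemma cmap_integrable (f : C(X, ℝ)) (μ : Measure X) [IsFiniteMeasure μ] :
    Integrable (⇑f) μ := by
  have := (mkOfCompact f).integrable μ
  exact this

lemma lam_le_integral (hone : Λ 1 = 1) (f : C(X, ℝ)) (hf : ∀ x, 0 ≤ f x) :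
    Λ f ≤ ∫ x, f x ∂(rmkMeasure Λ hpos) := by
  set μ := rmkMeasure Λ hpos with hμdef
  haveI : IsProbabilityMeasure μ := rmk_isProbability Λ hpos hone
  have hint : Integrable (⇑f) μ := cmap_integrable f μ
  suffices H : ∀ ε : ℝ, 0 < ε → ε ≤ 1 → Λ f ≤ ∫ x, f x ∂μ + (‖f‖ + 4) * ε by
    by_contra hcon
    push_neg at hcon
    set c := Λ f - ∫ x, f x ∂μ with hc
    have hcpos : 0 < c := by simp only [hc]; linarith
    have hb4 : (0:ℝ) < ‖f‖ + 4 := by positivity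
    set ε := min 1 (c / (2 * (‖f‖ + 4))) with hεdef
    have hεpos : 0 < ε := lt_min one_pos (by positivity)
    have h1 := H ε hεpos (min_le_left _ _)
    have h2 : (‖f‖ + 4) * ε ≤ (‖f‖ + 4) * (c / (2 * (‖f‖ + 4))) :=
      mul_le_mul_of_nonneg_left (min_le_right _ _) hb4.le
    have h3 : (‖f‖ + 4) * (c / (2 * (‖f‖ + 4))) = c / 2 := by field_simp
    rw [h3] at h2
    have : c ≤ c / 2 := by linarith
    linarith
  intro ε hε hε1
  have hnorm : ∀ x, f x ≤ ‖f‖ := fun x => (le_abs_self _).trans (f.norm_coe_le_norm x)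
  set b := ‖f‖ + 1 with hbdef
  have hb : 0 < b := by positivity
  set n := ⌈b / ε⌉₊ with hndef
  have hn0 : 0 < n := Nat.ceil_pos.2 (by positivity)
  have hn0' : (0:ℝ) < n := by exact_mod_cast hn0
  set δ := b / n with hδdef
  have hδ : 0 < δ := by positivity
  have hnδ : (n:ℝ) * δ = b := by rw [hδdef]; field_simp
  have hδε : δ ≤ ε := by
    rw [hδdef, div_le_iff₀ hn0']
    have h := Nat.le_ceil (b / ε)
    calc b = (b / ε) * ε := by field_simp
      _ ≤ (n:ℝ) * ε := mul_le_mul_of_nonneg_right (by exact_mod_cast h) hε.le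
      _ = ε * n := mul_comm _ _
  set l : Fin n → ℝ := fun i => if (i:ℕ) = 0 then -1 else (i:ℕ) * δ with hldef
  set u : Fin n → ℝ := fun i => ((i:ℕ) + 1) * δ with hudef
  set E : Fin n → Set X := fun i => f ⁻¹' (Set.Ioc (l i) (u i)) with hEdef
  have hmeas : ∀ i, MeasurableSet (E i) :=
    fun i => (map_continuous f).measurable measurableSet_Ioc
  have hltu : ∀ i, ∀ x ∈ E i, f x ≤ u i ∧ u i - ε ≤ f x := by
    intro i x hx
    rw [hEdef, Set.mem_preimage, Set.mem_Ioc] at hx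
    refine ⟨hx.2, ?_⟩
    by_cases h0 : (i : ℕ) = 0
    · have hu0 : u i = δ := by simp [hudef, h0]
      have := hf x
      rw [hu0]; linarith
    · have hl : l i = (i:ℕ) * δ := by simp [hldef, h0]
      have : u i - δ = l i := by rw [hl, hudef]; ring
      linarith [hx.1]
  have haux : ∀ i j : Fin n, (i:ℕ) < (j:ℕ) → Disjoint (E i) (E j) := by
    intro i j hij
    have hul : u i ≤ l j := by
      have hj0 : (j:ℕ) ≠ 0 := by omega
      have : ((i:ℕ):ℝ) + 1 ≤ ((j:ℕ):ℝ) := by exact_mod_cast hij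
      simp only [hldef, hudef, hj0, if_false]
      exact mul_le_mul_of_nonneg_right this hδ.le
    rw [Set.disjoint_left]
    intro x hxi hxj
    rw [hEdef, Set.mem_preimage, Set.mem_Ioc] at hxi hxj
    linarith [hxi.2, hxj.1]
  have hdisj : Pairwise (Function.onFun Disjoint E) := by
    intro i j hij
    rcases lt_or_gt_of_ne (fun h : (i:ℕ) = (j:ℕ) => hij (Fin.ext h)) with h | h
    · exact haux i j h
    · exact (haux j i h).symm
  have hcover : ∀ x, ∃ i, x ∈ E i := by
    intro x
    by_cases hx : f x ≤ δ
    · refine ⟨⟨0, hn0⟩, ?_⟩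
      rw [hEdef, Set.mem_preimage, Set.mem_Ioc]
      constructor
      · simp only [hldef]; simp; linarith [hf x]
      · simp only [hudef]; simp; linarith
    · push_neg at hx
      set k := ⌈f x / δ⌉₊ with hkdef
      have hk1 : 1 < k := by
        rw [hkdef, Nat.lt_ceil]
        push_cast
        rw [lt_div_iff₀ hδ]; linarith
      have hkn : k ≤ n := by
        rw [hkdef, Nat.ceil_le, div_le_iff₀ hδ]
        have h1 : f x ≤ b := by rw [hbdef]; linarith [hnorm x]
        rw [mul_comm]; linarith [hnδ]
      refine ⟨⟨k - 1, by omega⟩, ?_⟩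
      rw [hEdef, Set.mem_preimage, Set.mem_Ioc]
      have hne : (k - 1 : ℕ) ≠ 0 := by omega
      have hcast : (((k:ℕ) - 1 : ℕ) : ℝ) = (k:ℝ) - 1 := by
        push_cast [Nat.cast_sub (by omega : 1 ≤ k)]; ring
      constructor
      · simp only [hldef, hne, if_false]
        show ((⟨k-1, by omega⟩ : Fin n) : ℕ) * δ < f x
        have hceil := Nat.ceil_lt_add_one (le_of_lt (div_pos (by linarith) hδ))
        have : ((k:ℝ) - 1) * δ < f x := by
          rw [← lt_div_iff₀ hδ]
          rw [hkdef] at *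
          linarith [hceil]
        calc (((k - 1 : ℕ)) : ℝ) * δ = ((k:ℝ) - 1) * δ := by rw [hcast]
          _ < f x := this
      · show f x ≤ (((⟨k-1, by omega⟩ : Fin n) : ℕ) + 1 : ℝ) * δ
        have h1 : f x ≤ (k:ℝ) * δ := by
          rw [← div_le_iff₀ hδ]; exact Nat.le_ceil _
        have : ((((k - 1 : ℕ)) : ℝ) + 1) = (k : ℝ) := by rw [hcast]; ring
        rw [show (((⟨k-1, by omega⟩ : Fin n) : ℕ) : ℝ) = (((k-1:ℕ)):ℝ) from rfl, this]
        exact h1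
  have hupos : ∀ i, 0 < u i := by
    intro i
    have : (0:ℝ) < (i:ℕ) + 1 := by positivity
    exact mul_pos this hδ
  have hub : ∀ i, u i ≤ b := by
    intro i
    rw [hudef, ← hnδ]
    have : ((i:ℕ):ℝ) + 1 ≤ (n:ℝ) := by exact_mod_cast i.2
    exact mul_le_mul_of_nonneg_right this hδ.le
  -- open sets
  haveI : μ.Regular := rmkMeasure_regular Λ hpos
  have hVex : ∀ i, ∃ V, E i ⊆ V ∧ IsOpen V ∧ μ V ≤ μ (E i) + ENNReal.ofReal (ε / n) ∧
      ∀ x ∈ V, f x < u i + ε := by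
    intro i
    obtain ⟨U, hEU, hUopen, hUμ⟩ := Set.exists_isOpen_lt_add (E i) (measure_ne_top μ _)
      (μ := μ) (ε := ENNReal.ofReal (ε / n)) (ENNReal.ofReal_pos.2 (div_pos hε hn0') |>.ne')
    refine ⟨U ∩ f ⁻¹' (Set.Iio (u i + ε)), ?_, hUopen.inter (isOpen_Iio.preimage (map_continuous f)), ?_, ?_⟩
    · intro x hx
      refine ⟨hEU hx, ?_⟩
      rw [Set.mem_preimage, Set.mem_Iio]
      linarith [(hltu i x hx).1]
    · exact le_trans (measure_mono Set.inter_subset_left) hUμ.le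
    · intro x hx
      exact hx.2
  choose V hEV hVopen hVμ hVf using hVex
  have hVcover : (Set.univ : Set X) ⊆ ⋃ i, V i := by
    intro x _
    obtain ⟨i, hi⟩ := hcover x
    exact Set.mem_iUnion.2 ⟨i, hEV i hi⟩
  obtain ⟨p, hp⟩ := PartitionOfUnity.exists_isSubordinate isClosed_univ V hVopen hVcover
  have hpnn : ∀ i, ∀ x, (0:ℝ) ≤ (p i) x := fun i x => p.nonneg i x
  -- step 1
  have hsum : ∑ i, (p i * f) = f := by
    ext x
    have h1 := p.sum_eq_one (Set.mem_univ x)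
    rw [finsum_eq_sum_of_fintype] at h1
    simp only [ContinuousMap.coe_sum, Finset.sum_apply, ContinuousMap.mul_apply]
    rw [← Finset.sum_mul, h1, one_mul]
  have step1 : Λ f = ∑ i, Λ (p i * f) := by rw [← map_sum, hsum]
  -- step 2
  have step2 : ∀ i, Λ (p i * f) ≤ (u i + ε) * Λ (p i) := by
    intro i
    have hpt : ∀ x, (p i * f) x ≤ ((u i + ε) • (p i)) x := by
      intro x
      simp only [ContinuousMap.mul_apply, ContinuousMap.smul_apply, smul_eq_mul]
      by_cases hx : x ∈ tsupport ⇑(p i)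
      · have hfx : f x < u i + ε := hVf i x (hp i hx)
        calc (p i) x * f x ≤ (p i) x * (u i + ε) :=
              mul_le_mul_of_nonneg_left hfx.le (hpnn i x)
          _ = (u i + ε) * (p i) x := mul_comm _ _
      · rw [image_eq_zero_of_notMem_tsupport hx]; simp
    have := lam_mono Λ hpos hpt
    rwa [Λ.map_smul, smul_eq_mul] at this
  -- step 3
  have step3 : ∀ i, Λ (p i) ≤ (μ (E i)).toReal + ε / n := by
    intro i
    have h1 : Λ (p i) ≤ (μ (V i)).toReal :=
      lam_le_measure_of_tsupport Λ hpos hone (p i) (hpnn i) (fun x => p.le_one i x)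
        (hVopen i) (hp i)
    have h2 : (μ (V i)).toReal ≤ (μ (E i)).toReal + ε / n := by
      have h3 := ENNReal.toReal_mono
        (by exact ENNReal.add_ne_top.2 ⟨measure_ne_top μ _, ENNReal.ofReal_ne_top⟩) (hVμ i)
      rwa [ENNReal.toReal_add (measure_ne_top μ _) ENNReal.ofReal_ne_top,
        ENNReal.toReal_ofReal (by positivity)] at h3
    linarith
  have hΛpnn : ∀ i, 0 ≤ Λ (p i) := fun i => hpos _ (hpnn i)
  have huε : ∀ i, (0:ℝ) ≤ u i + ε := fun i => by linarith [hupos i]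
  -- combine
  have main : Λ f ≤ ∑ i, (u i + ε) * ((μ (E i)).toReal + ε / n) := by
    rw [step1]
    refine Finset.sum_le_sum (fun i _ => ?_)
    calc Λ (p i * f) ≤ (u i + ε) * Λ (p i) := step2 i
      _ ≤ (u i + ε) * ((μ (E i)).toReal + ε / n) :=
          mul_le_mul_of_nonneg_left (step3 i) (huε i)
  have expand : ∑ i, (u i + ε) * ((μ (E i)).toReal + ε / n)
      = ∑ i, (u i + ε) * (μ (E i)).toReal + ∑ i, (u i + ε) * (ε / n) := by
    rw [← Finset.sum_add_distrib]
    congr 1; ext i; ring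
  have partA : ∑ i, (u i + ε) * (ε / n) ≤ (b + 1) * ε := by
    have h1 : ∀ i ∈ Finset.univ, (u i + ε) * (ε / n) ≤ (b + 1) * (ε / n) := by
      intro i _
      have : u i + ε ≤ b + 1 := by linarith [hub i]
      exact mul_le_mul_of_nonneg_right this (by positivity)
    calc ∑ i, (u i + ε) * (ε / n) ≤ ∑ _i : Fin n, (b + 1) * (ε / n) :=
          Finset.sum_le_sum h1
      _ = n * ((b + 1) * (ε / n)) := by
          rw [Finset.sum_const, Finset.card_univ, Fintype.card_fin, nsmul_eq_mul]
      _ = (b + 1) * ε := by field_simp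
  have partB : ∑ i, (u i + ε) * (μ (E i)).toReal ≤ ∫ x, f x ∂μ + 2 * ε := by
    have hterm : ∀ i ∈ Finset.univ, (u i + ε) * (μ (E i)).toReal
        ≤ ∫ x in E i, (f x + 2 * ε) ∂μ := by
      intro i _
      have hconst : ∫ x in E i, (u i + ε) ∂μ = (μ (E i)).toReal * (u i + ε) := by
        rw [setIntegral_const, smul_eq_mul]; rfl
      rw [mul_comm, ← hconst]
      refine setIntegral_mono_on (integrableOn_const (measure_lt_top _ _).ne)
        ((hint.add (integrable_const _)).integrableOn) (hmeas i) ?_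
      intro x hx
      linarith [(hltu i x hx).2]
    have hsplit : ∑ i, ∫ x in E i, (f x + 2 * ε) ∂μ = ∫ x, f x ∂μ + 2 * ε := by
      rw [← integral_biUnion_finset (f := fun x => f x + 2 * ε) Finset.univ (fun i _ => hmeas i)
        ((hdisj.set_pairwise _))
        (fun i _ => (hint.add (integrable_const _)).integrableOn)]
      have hU : ⋃ i ∈ (Finset.univ : Finset (Fin n)), E i = Set.univ := by
        simp only [Finset.mem_univ, Set.iUnion_true]
        exact Set.eq_univ_of_forall (fun x => Set.mem_iUnion.2 (hcover x))
      rw [hU, Measure.restrict_univ, integral_add hint (integrable_const _),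
        integral_const, probReal_univ]
      simp
    calc ∑ i, (u i + ε) * (μ (E i)).toReal ≤ ∑ i, ∫ x in E i, (f x + 2 * ε) ∂μ :=
          Finset.sum_le_sum hterm
      _ = ∫ x, f x ∂μ + 2 * ε := hsplit
  calc Λ f ≤ ∑ i, (u i + ε) * ((μ (E i)).toReal + ε / n) := main
    _ = ∑ i, (u i + ε) * (μ (E i)).toReal + ∑ i, (u i + ε) * (ε / n) := expand
    _ ≤ (∫ x, f x ∂μ + 2 * ε) + (b + 1) * ε := add_le_add partB partA
    _ = ∫ x, f x ∂μ + (‖f‖ + 4) * ε := by rw [hbdef]; ring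

end RMK4

section RMK5
variable {X : Type*} [TopologicalSpace X] [CompactSpace X] [T2Space X]
  [MeasurableSpace X] [BorelSpace X]

/-- Riesz–Markov–Kakutani representation for compact Hausdorff spaces. -/
theorem rmk_exists (Λ : C(X, ℝ) →ₗ[ℝ] ℝ) (hpos : ∀ f : C(X,ℝ), (∀ x, 0 ≤ f x) → 0 ≤ Λ f)
    (hone : Λ 1 = 1) :
    ∃ μ : Measure X, IsProbabilityMeasure μ ∧ μ.Regular ∧
      ∀ f : C(X, ℝ), ∫ x, f x ∂μ = Λ f := by
  refine ⟨rmkMeasure Λ hpos, rmk_isProbability Λ hpos hone, rmkMeasure_regular Λ hpos, ?_⟩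
  set μ := rmkMeasure Λ hpos with hμdef
  haveI : IsProbabilityMeasure μ := rmk_isProbability Λ hpos hone
  have forward : ∀ g : C(X, ℝ), Λ g ≤ ∫ x, g x ∂μ := by
    intro g
    set gc : C(X, ℝ) := g + ‖g‖ • 1 with hgc
    have hgcnn : ∀ x, 0 ≤ gc x := by
      intro x
      simp only [hgc, ContinuousMap.add_apply, ContinuousMap.smul_apply,
        ContinuousMap.one_apply, smul_eq_mul, mul_one]
      have : -g x ≤ ‖g‖ := (neg_le_abs _).trans (g.norm_coe_le_norm x)
      linarith
    have key := lam_le_integral Λ hpos hone gc hgcnn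
    have h1 : Λ gc = Λ g + ‖g‖ := by
      rw [hgc, map_add, Λ.map_smul, hone, smul_eq_mul, mul_one]
    have h2 : ∫ x, gc x ∂μ = (∫ x, g x ∂μ) + ‖g‖ := by
      have : ∀ x, gc x = g x + ‖g‖ := by
        intro x; simp [hgc]
      simp_rw [this]
      rw [integral_add (cmap_integrable g μ) (integrable_const _), integral_const,
        probReal_univ]
      simp
    rw [h1, h2] at key
    linarith
  intro f
  have h1 := forward f
  have h2 := forward (-f)
  rw [map_neg] at h2
  have h3 : ∫ x, (-f) x ∂μ = -∫ x, f x ∂μ := by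
    simp only [ContinuousMap.neg_apply]
    exact integral_neg _
  rw [h3] at h2
  linarith

lemma compact_le_of_integral_eq (μ ν : Measure X) [IsProbabilityMeasure μ]
    [IsProbabilityMeasure ν] (hν : ν.Regular)
    (h : ∀ f : C(X, ℝ), ∫ x, f x ∂μ = ∫ x, f x ∂ν) {K : Set X} (hK : IsCompact K) :
    μ K ≤ ν K := by
  haveI := hν
  rw [Set.measure_eq_iInf_isOpen K ν]
  refine le_iInf fun U => le_iInf fun hKU => le_iInf fun hU => ?_
  obtain ⟨g, hg0, hg1, hg01⟩ := exists_continuous_zero_one_of_isClosed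
    (isClosed_compl_iff.2 hU) hK.isClosed
    (disjoint_compl_left_iff_subset.2 hKU)
  have hgμ : Integrable (⇑g) μ := cmap_integrable g μ
  have hgν : Integrable (⇑g) ν := cmap_integrable g ν
  have hμK : (μ K).toReal ≤ ∫ x, g x ∂μ := by
    have h1 : ∫ x in K, g x ∂μ = (μ K).toReal := by
      rw [setIntegral_congr_fun hK.measurableSet (fun x hx => hg1 hx)]
      simp [Measure.real]
    have h2 := setIntegral_le_integral (s := K) hgμ
      (Filter.Eventually.of_forall (fun x => (hg01 x).1))
    rw [h1] at h2; exact h2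
  have hνU : ∫ x, g x ∂ν ≤ (ν U).toReal := by
    have hsplit : (∫ x in U, g x ∂ν) + (∫ x in Uᶜ, g x ∂ν) = ∫ x, g x ∂ν :=
      integral_add_compl hU.measurableSet hgν
    have hc : ∫ x in Uᶜ, g x ∂ν = 0 := by
      rw [setIntegral_congr_fun hU.measurableSet.compl hg0]
      simp
    have hUb : ∫ x in U, g x ∂ν ≤ ∫ x in U, (1:ℝ) ∂ν := by
      refine setIntegral_mono_on hgν.integrableOn
        (integrableOn_const (measure_lt_top _ _).ne) hU.measurableSet ?_
      exact fun x _ => (hg01 x).2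
    have h1 : ∫ x in U, (1:ℝ) ∂ν = (ν U).toReal := by simp [Measure.real]
    linarith
  have hfin : (μ K).toReal ≤ (ν U).toReal := by
    rw [h g] at hμK
    linarith
  exact (ENNReal.toReal_le_toReal (measure_ne_top μ _) (measure_ne_top ν _)).1 hfin

lemma measure_eq_of_integral_eq (μ ν : Measure X) [IsProbabilityMeasure μ]
    [IsProbabilityMeasure ν] (hμ : μ.Regular) (hν : ν.Regular)
    (h : ∀ f : C(X, ℝ), ∫ x, f x ∂μ = ∫ x, f x ∂ν) : μ = ν := by
  have hcomp : ∀ K : Set X, IsCompact K → μ K = ν K := fun K hK =>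
    le_antisymm (compact_le_of_integral_eq μ ν hν h hK)
      (compact_le_of_integral_eq ν μ hμ (fun f => (h f).symm) hK)
  haveI := hμ; haveI := hν
  haveI : μ.InnerRegularCompactLTTop := inferInstance
  haveI : ν.InnerRegularCompactLTTop := inferInstance
  ext s hs
  rw [hs.measure_eq_iSup_isCompact_of_ne_top (measure_ne_top μ s),
    hs.measure_eq_iSup_isCompact_of_ne_top (measure_ne_top ν s)]
  exact iSup_congr fun K => iSup_congr fun _ => iSup_congr fun hK => hcomp K hK

end RMK5

section Main
variable {G X : Type*} [Group G] [TopologicalSpace G] [DiscreteTopology G]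
    [TopologicalSpace X] [CompactSpace X] [T2Space X]
    [MeasurableSpace X] [BorelSpace X]
    [MulAction G X] [ContinuousConstSMul G X]

lemma smul_integrable (ν : Measure X) [IsFiniteMeasure ν] (f : C(X, ℝ)) (s : G) :
    Integrable (fun x => f (s • x)) ν :=
  cmap_integrable (f.comp ⟨fun x => s • x, continuous_const_smul s⟩) ν

/-- The Poisson map as a linear map. -/
noncomputable def poissonMap (ν : Measure X) [IsProbabilityMeasure ν] :
    C(X, ℝ) →ₗ[ℝ] BoundedContinuousFunction G ℝ where
  toFun f := BoundedContinuousFunction.ofNormedAddCommGroup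
    (fun s => ∫ x, f (s • x) ∂ν) continuous_of_discreteTopology ‖f‖ (fun s => by
      have := norm_integral_le_of_norm_le_const (μ := ν) (f := fun x => f (s • x))
        (C := ‖f‖) (Filter.Eventually.of_forall (fun x => f.norm_coe_le_norm _))
      simpa [measure_univ] using this)
  map_add' f g := by
    ext s
    simp only [BoundedContinuousFunction.coe_ofNormedAddCommGroup,
      BoundedContinuousFunction.coe_add, Pi.add_apply, ContinuousMap.add_apply]
    exact integral_add (smul_integrable ν f s) (smul_integrable ν g s)
  map_smul' c f := by
    ext s
    simp only [BoundedContinuousFunction.coe_ofNormedAddCommGroup,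
      BoundedContinuousFunction.coe_smul, Pi.smul_apply, ContinuousMap.smul_apply,
      RingHom.id_apply, smul_eq_mul]
    rw [← smul_eq_mul, ← integral_smul]
    simp [smul_eq_mul]

@[simp] lemma poissonMap_apply (ν : Measure X) [IsProbabilityMeasure ν] (f : C(X, ℝ)) (s : G) :
    poissonMap ν f s = ∫ x, f (s • x) ∂ν := rfl

end Main


/-- The correspondence `ν ↦ P_ν` is a bijection between regular Borel probability measures
on `X` and unital positive `G`-equivariant linear maps `C(X,ℝ) → ℓ∞(G)`: every `P_ν` is such
a map, and every such map `ψ` equals `P_ν` for a unique regular Borel probability measure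
`ν`. -/
theorem stmt_4 {G X : Type*} [Group G] [TopologicalSpace G] [DiscreteTopology G]
    [TopologicalSpace X] [CompactSpace X] [T2Space X]
    [MeasurableSpace X] [BorelSpace X]
    [MulAction G X] [ContinuousConstSMul G X] :
    (∀ ν : ProbabilityMeasure X, (ν : Measure X).Regular →
      ∃ ψ : C(X, ℝ) →ₗ[ℝ] BoundedContinuousFunction G ℝ,
        (∀ (f : C(X, ℝ)) (s : G), ψ f s = ∫ x, f (s • x) ∂(ν : Measure X)) ∧
        (∀ s : G, ψ 1 s = 1) ∧
        (∀ f : C(X, ℝ), (∀ x, 0 ≤ f x) → ∀ s : G, 0 ≤ ψ f s) ∧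
        (∀ (s : G) (f : C(X, ℝ)) (t : G),
          ψ (f.comp ⟨fun x => s⁻¹ • x, continuous_const_smul s⁻¹⟩) t = ψ f (s⁻¹ * t)))
    ∧
    (∀ ψ : C(X, ℝ) →ₗ[ℝ] BoundedContinuousFunction G ℝ,
      (∀ s : G, ψ 1 s = 1) →
      (∀ f : C(X, ℝ), (∀ x, 0 ≤ f x) → ∀ s : G, 0 ≤ ψ f s) →
      (∀ (s : G) (f : C(X, ℝ)) (t : G),
          ψ (f.comp ⟨fun x => s⁻¹ • x, continuous_const_smul s⁻¹⟩) t = ψ f (s⁻¹ * t)) →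
      ∃! ν : ProbabilityMeasure X, (ν : Measure X).Regular ∧
        ∀ (f : C(X, ℝ)) (s : G), ψ f s = ∫ x, f (s • x) ∂(ν : Measure X)) := by
  constructor
  · -- forward direction: every `P_ν` is a unital positive equivariant linear map
    intro ν _
    haveI : IsProbabilityMeasure (ν : Measure X) := ν.2
    refine ⟨poissonMap (ν : Measure X), fun f s => rfl, ?_, ?_, ?_⟩
    · intro s
      rw [poissonMap_apply]
      simp only [ContinuousMap.one_apply]
      rw [integral_const, probReal_univ]
      simp
    · intro f hf s
      rw [poissonMap_apply]
      exact integral_nonneg (fun x => hf _)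
    · intro s f t
      rw [poissonMap_apply, poissonMap_apply]
      refine integral_congr_ae (Filter.Eventually.of_forall (fun x => ?_))
      simp [mul_smul]
  · -- converse
    intro ψ hone hpos hequiv
    set Λ : C(X, ℝ) →ₗ[ℝ] ℝ :=
      { toFun := fun f => ψ f 1
        map_add' := fun f g => by simp
        map_smul' := fun c f => by simp } with hΛdef
    have hΛpos : ∀ f : C(X, ℝ), (∀ x, 0 ≤ f x) → 0 ≤ Λ f := fun f hf => hpos f hf 1
    have hΛone : Λ 1 = 1 := hone 1
    obtain ⟨μ, hprob, hreg, hint⟩ := rmk_exists Λ hΛpos hΛone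
    have hψs : ∀ (f : C(X, ℝ)) (s : G), ψ f s = ∫ x, f (s • x) ∂μ := by
      intro f s
      have h := hequiv s⁻¹ f 1
      rw [inv_inv, mul_one] at h
      have h2 : Λ (f.comp ⟨fun x => s • x, continuous_const_smul s⟩) =
          ∫ x, f (s • x) ∂μ := (hint _).symm
      rw [← h, ← h2]
      rfl
    refine ⟨⟨μ, hprob⟩, ⟨hreg, fun f s => hψs f s⟩, ?_⟩
    rintro ν' ⟨hreg', hint'⟩
    haveI : IsProbabilityMeasure (ν' : Measure X) := ν'.2
    have heq : ∀ f : C(X, ℝ), ∫ x, f x ∂(ν' : Measure X) = ∫ x, f x ∂μ := by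
      intro f
      have h1 := hint' f 1
      have h2 := hψs f 1
      simp only [one_smul] at h1 h2
      rw [← h1, h2]
    exact Subtype.ext (measure_eq_of_integral_eq (ν' : Measure X) μ hreg' hreg heq)
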